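/- The hierarchical (hat) basis functions up to level ℓ span the space of continuous piecewise linear functions on the uniform grid of mesh size 2^{-ℓ} on [0,1]; moreover, the decomposition V_ℓ = W_0 ⊕ W_1 ⊕ … ⊕ W_ℓ is a direct sum, i.e., the collection {ψ_{m,j} : 0 ≤ m ≤ ℓ, j ∈ B_m} is linearly independent and has cardinality 2^ℓ + 1. -/

import Mathlib

open MeasureTheory Filter Real Set
noncomputable section

/-- The hierarchical (hat) basis function of level `m` and index `j`:
`ψ_{m,j}(x) = max(0, 1 - |x/h_m - j|)` with `h_m = 2^{-m}`. -/
def hatFn (m j : ℕ) (x : ℝ) : ℝ := max 0 (1 - |x * 2^m - (j:ℝ)|)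

/-- The hierarchical index set up to level `ℓ`: pairs `(m, j)` with `m ≤ ℓ` and `j ∈ B_m`,
where `B_0 = {0,1}` and `B_m = {j odd, 1 ≤ j ≤ 2^m - 1}` for `m > 0`. -/
def hierIdx (ℓ : ℕ) : Set (ℕ × ℕ) :=
  {p | p.1 ≤ ℓ ∧ ((p.1 = 0 ∧ p.2 ≤ 1) ∨ (p.1 ≠ 0 ∧ Odd p.2 ∧ p.2 < 2^p.1))}

namespace HierAux

lemma hatFn_eq_one {m j : ℕ} {x : ℝ} (h : x * 2^m = j) : hatFn m j x = 1 := by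
  simp [hatFn, h]

lemma hatFn_eq_zero {m j : ℕ} {x : ℝ} (h : 1 ≤ |x * 2^m - (j:ℝ)|) : hatFn m j x = 0 :=
  max_eq_left (by linarith)

def nodeVal (ℓ n : ℕ) : ℝ := n / 2^ℓ

lemma nodeVal_mem {ℓ n : ℕ} (h : n ≤ 2^ℓ) : nodeVal ℓ n ∈ Icc (0:ℝ) 1 := by
  constructor
  · unfold nodeVal; positivity
  · rw [nodeVal, div_le_one (by positivity)]
    exact_mod_cast h

def node (ℓ : ℕ) (n : Fin (2^ℓ+1)) : Icc (0:ℝ) 1 :=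
  ⟨nodeVal ℓ n, nodeVal_mem (Nat.lt_succ_iff.mp n.2)⟩

def evalL (ℓ : ℕ) : ((Icc (0:ℝ) 1 → ℝ)) →ₗ[ℝ] (Fin (2^ℓ+1) → ℝ) where
  toFun f n := f (node ℓ n)
  map_add' _ _ := rfl
  map_smul' _ _ := rfl

lemma evalL_apply (ℓ : ℕ) (f : Icc (0:ℝ) 1 → ℝ) (n : Fin (2^ℓ+1)) :
    evalL ℓ f n = f (node ℓ n) := rfl

def ν (ℓ : ℕ) (p : ℕ × ℕ) : ℕ := p.2 * 2^(ℓ - p.1)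

lemma ν_le {ℓ : ℕ} {p : ℕ × ℕ} (hp : p ∈ hierIdx ℓ) : ν ℓ p ≤ 2^ℓ := by
  obtain ⟨h1, h2⟩ := hp
  have hj : p.2 ≤ 2^p.1 := by
    rcases h2 with ⟨_, h⟩ | ⟨_, _, h⟩
    · exact le_trans h (Nat.one_le_two_pow)
    · exact le_of_lt h
  calc ν ℓ p = p.2 * 2^(ℓ - p.1) := rfl
    _ ≤ 2^p.1 * 2^(ℓ - p.1) := Nat.mul_le_mul_right _ hj
    _ = 2^ℓ := by rw [← pow_add]; congr 1; omega

lemma nodeVal_mul' {ℓ m k j : ℕ} (hk : k ≤ m) (hm : m ≤ ℓ) :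
    nodeVal ℓ (j * 2^(ℓ-k)) * 2^m = ((j * 2^(m-k) : ℕ) : ℝ) := by
  have h2 : (2:ℝ)^(ℓ-k) * 2^m = 2^(m-k) * 2^ℓ := by
    rw [← pow_add, ← pow_add]; congr 1; omega
  have hpos : (2:ℝ)^ℓ ≠ 0 := by positivity
  rw [nodeVal]
  push_cast
  field_simp
  linear_combination (j:ℝ) * h2

lemma one_le_abs_of_ne {a b : ℕ} (h : a ≠ b) : (1:ℝ) ≤ |(a:ℝ) - (b:ℝ)| := by
  have h' : (1:ℤ) ≤ |(a:ℤ) - (b:ℤ)| := Int.one_le_abs (by omega)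
  exact_mod_cast h'

lemma ν_inj {ℓ : ℕ} {p q : ℕ×ℕ} (hp : p ∈ hierIdx ℓ) (hq : q ∈ hierIdx ℓ)
    (hle : q.1 ≤ p.1) (hne : q ≠ p) : q.2 * 2^(p.1 - q.1) ≠ p.2 := by
  intro h
  rcases eq_or_lt_of_le hle with heq | hlt
  · rw [heq, Nat.sub_self, pow_zero, mul_one] at h
    exact hne (Prod.ext heq h)
  · have hp1 : p.1 ≠ 0 := by omega
    have hodd : Odd p.2 := by
      rcases hp.2 with ⟨h0, _⟩ | ⟨_, ho, _⟩
      · exact absurd h0 hp1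
      · exact ho
    have h2 : 2 ∣ q.2 * 2^(p.1-q.1) :=
      Dvd.dvd.mul_left (dvd_pow_self 2 (by omega : p.1 - q.1 ≠ 0)) _
    rw [h] at h2
    have := Nat.odd_iff.mp hodd
    omega

lemma ν_inj_full {ℓ : ℕ} {p q : ℕ×ℕ} (hp : p ∈ hierIdx ℓ) (hq : q ∈ hierIdx ℓ)
    (hle : q.1 ≤ p.1) (h : ν ℓ p = ν ℓ q) : p = q := by
  by_contra hne
  apply ν_inj hp hq hle (fun e => hne e.symm)
  have hcancel : q.2 * 2^(p.1-q.1) * 2^(ℓ-p.1) = p.2 * 2^(ℓ-p.1) := by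
    rw [mul_assoc, ← pow_add]
    have he : (p.1-q.1) + (ℓ-p.1) = ℓ - q.1 := by
      have := hp.1; omega
    rw [he]
    exact h.symm
  exact Nat.eq_of_mul_eq_mul_right (Nat.pow_pos (by norm_num)) hcancel

lemma ν_surj {ℓ n : ℕ} (h : n ≤ 2^ℓ) : ∃ p ∈ hierIdx ℓ, ν ℓ p = n := by
  rcases Nat.eq_zero_or_pos n with rfl | hn
  · exact ⟨(0,0), ⟨Nat.zero_le _, Or.inl ⟨rfl, by norm_num⟩⟩, by simp [ν]⟩
  rcases eq_or_lt_of_le h with rfl | hlt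
  · exact ⟨(0,1), ⟨Nat.zero_le _, Or.inl ⟨rfl, le_refl 1⟩⟩, by simp [ν]⟩
  · set k := n.factorization 2 with hkdef
    set j := n / 2^k with hjdef
    have hnj : 2^k * j = n := Nat.ordProj_mul_ordCompl_eq_self n 2
    have hjodd : ¬ 2 ∣ j := Nat.not_dvd_ordCompl (by norm_num) (by omega)
    have hkle : 2^k ≤ n := Nat.ordProj_le 2 (by omega)
    have hkl : k < ℓ := by
      have : (2:ℕ)^k < 2^ℓ := lt_of_le_of_lt hkle hlt
      exact (Nat.pow_lt_pow_iff_right (by norm_num)).mp this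
    refine ⟨(ℓ - k, j), ⟨by omega, Or.inr ⟨by omega, Nat.odd_iff.mpr (by omega), ?_⟩⟩, ?_⟩
    · -- j < 2^(ℓ-k)
      have h2 : (2:ℕ)^ℓ = 2^k * 2^(ℓ-k) := by rw [← pow_add]; congr 1; omega
      have : 2^k * j < 2^k * 2^(ℓ-k) := by rw [hnj, ← h2]; exact hlt
      exact Nat.lt_of_mul_lt_mul_left this
    · show j * 2^(ℓ - (ℓ - k)) = n
      have : ℓ - (ℓ - k) = k := by omega
      rw [this, Nat.mul_comm, hnj]

def toFin (ℓ : ℕ) (p : hierIdx ℓ) : Fin (2^ℓ+1) := ⟨ν ℓ p, Nat.lt_succ_of_le (ν_le p.2)⟩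

lemma toFin_bij (ℓ : ℕ) : Function.Bijective (toFin ℓ) := by
  constructor
  · intro p q h
    have h' : ν ℓ p.1 = ν ℓ q.1 := congrArg Fin.val h
    rcases le_total q.1.1 p.1.1 with hle | hle
    · exact Subtype.ext (ν_inj_full p.2 q.2 hle h')
    · exact Subtype.ext (ν_inj_full q.2 p.2 hle h'.symm).symm
  · intro n
    obtain ⟨p, hp, hνp⟩ := ν_surj (Nat.lt_succ_iff.mp n.2)
    exact ⟨⟨p, hp⟩, Fin.ext hνp⟩

def hierEquiv (ℓ : ℕ) : hierIdx ℓ ≃ Fin (2^ℓ+1) := Equiv.ofBijective _ (toFin_bij ℓ)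

instance hierFintype (ℓ : ℕ) : Fintype (hierIdx ℓ) := Fintype.ofEquiv _ (hierEquiv ℓ).symm

lemma card_hier (ℓ : ℕ) : Fintype.card (hierIdx ℓ) = 2^ℓ+1 := by
  rw [Fintype.card_congr (hierEquiv ℓ), Fintype.card_fin]

lemma eval_diag {ℓ : ℕ} {p : ℕ×ℕ} (hp : p ∈ hierIdx ℓ) :
    hatFn p.1 p.2 (nodeVal ℓ (ν ℓ p)) = 1 := by
  apply hatFn_eq_one
  have := nodeVal_mul' (le_refl p.1) hp.1 (j := p.2)
  simpa [ν] using this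

lemma eval_off {ℓ : ℕ} {p q : ℕ×ℕ} (hp : p ∈ hierIdx ℓ) (hq : q ∈ hierIdx ℓ)
    (hle : q.1 ≤ p.1) (hne : q ≠ p) :
    hatFn p.1 p.2 (nodeVal ℓ (ν ℓ q)) = 0 := by
  apply hatFn_eq_zero
  have hx := nodeVal_mul' hle hp.1 (j := q.2)
  rw [show ν ℓ q = q.2 * 2^(ℓ - q.1) from rfl, hx]
  exact one_le_abs_of_ne (ν_inj hp hq hle hne)

end HierAux
namespace HierAux

lemma li_eval (ℓ : ℕ) : LinearIndependent ℝ
    (fun p : hierIdx ℓ => evalL ℓ (fun x : Icc (0:ℝ) 1 => hatFn p.1.1 p.1.2 (x:ℝ))) := by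
  rw [linearIndependent_iff']
  intro s g hsum
  suffices H : ∀ L : ℕ, ∀ p ∈ s, p.1.1 = L → g p = 0 by
    intro p hp; exact H p.1.1 p hp rfl
  intro L
  induction L using Nat.strong_induction_on with
  | _ L IH =>
    intro p hp hL
    have happ := congrFun hsum (toFin ℓ p)
    rw [Finset.sum_apply] at happ
    have hps : ∀ q ∈ s, q ≠ p →
        (g q • evalL ℓ (fun x : Icc (0:ℝ) 1 => hatFn q.1.1 q.1.2 (x:ℝ))) (toFin ℓ p) = 0 := by
      intro q hq hqp
      rcases lt_or_ge q.1.1 L with hlt | hge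
      · rw [IH q.1.1 hlt q hq rfl]; simp
      · have h0 : hatFn q.1.1 q.1.2 (nodeVal ℓ (ν ℓ p.1)) = 0 :=
          eval_off q.2 p.2 (le_trans (le_of_eq hL) hge) (fun e => hqp (Subtype.ext e.symm))
        have : evalL ℓ (fun x : Icc (0:ℝ) 1 => hatFn q.1.1 q.1.2 (x:ℝ)) (toFin ℓ p)
            = hatFn q.1.1 q.1.2 (nodeVal ℓ (ν ℓ p.1)) := rfl
        simp [this, h0]
    rw [Finset.sum_eq_single_of_mem p hp hps] at happ
    have h1 : evalL ℓ (fun x : Icc (0:ℝ) 1 => hatFn p.1.1 p.1.2 (x:ℝ)) (toFin ℓ p)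
        = hatFn p.1.1 p.1.2 (nodeVal ℓ (ν ℓ p.1)) := rfl
    rw [Pi.smul_apply, h1, eval_diag p.2, smul_eq_mul, mul_one] at happ
    exact happ

lemma hatFn_affine {ℓ m j k : ℕ} (hm : m ≤ ℓ) (hk : k < 2^ℓ) :
    ∃ a b : ℝ, ∀ x : ℝ, x ∈ Icc ((k:ℝ)/2^ℓ) (((k:ℝ)+1)/2^ℓ) → hatFn m j x = a*x+b := by
  set d := ℓ - m with hd
  have hℓ2 : (2:ℝ)^ℓ = 2^m * 2^d := by rw [← pow_add]; congr 1; omega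
  have hdpos : (0:ℝ) < 2^d := by positivity
  have hmpos : (0:ℝ) < 2^m := by positivity
  have hlpos : (0:ℝ) < 2^ℓ := by positivity
  have key : ∀ x : ℝ, x ∈ Icc ((k:ℝ)/2^ℓ) (((k:ℝ)+1)/2^ℓ) →
      (k:ℝ)/2^d ≤ x*2^m ∧ x*2^m ≤ ((k:ℝ)+1)/2^d := by
    rintro x ⟨h1, h2⟩
    have p1 : (k:ℝ) ≤ x * 2^ℓ := (div_le_iff₀ hlpos).mp h1
    have p2 : x * 2^ℓ ≤ (k:ℝ)+1 := (le_div_iff₀ hlpos).mp h2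
    have hxx : x * 2^m * 2^d = x * 2^ℓ := by rw [hℓ2]; ring
    constructor
    · rw [div_le_iff₀ hdpos]; linarith
    · rw [le_div_iff₀ hdpos]; linarith
  rcases le_or_gt (j * 2^d) k with hc1 | hc1
  · rcases le_or_gt ((j+1) * 2^d) k with hc2 | hc2
    · -- t ≥ j+1 : zero
      refine ⟨0, 0, fun x hx => ?_⟩
      obtain ⟨ht1, ht2⟩ := key x hx
      have hcast : ((j:ℝ)+1) * 2^d ≤ (k:ℝ) := by exact_mod_cast hc2
      have hj1 : (j:ℝ)+1 ≤ (k:ℝ)/2^d := by rw [le_div_iff₀ hdpos]; linarith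
      have habs : 1 ≤ |x*2^m - (j:ℝ)| := le_trans (by linarith) (le_abs_self _)
      rw [hatFn_eq_zero habs]; ring
    · -- t ∈ [j, j+1]
      refine ⟨-(2^m), 1+j, fun x hx => ?_⟩
      obtain ⟨ht1, ht2⟩ := key x hx
      have hcast1 : (j:ℝ) * 2^d ≤ (k:ℝ) := by exact_mod_cast hc1
      have hcast2 : (k:ℝ)+1 ≤ ((j:ℝ)+1) * 2^d := by
        have : (k+1 : ℕ) ≤ (j+1) * 2^d := hc2
        exact_mod_cast this
      have hjt : (j:ℝ) ≤ x*2^m := by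
        have : (j:ℝ) ≤ (k:ℝ)/2^d := by rw [le_div_iff₀ hdpos]; linarith
        linarith
      have htj : x*2^m ≤ (j:ℝ)+1 := by
        have : ((k:ℝ)+1)/2^d ≤ (j:ℝ)+1 := by rw [div_le_iff₀ hdpos]; linarith
        linarith
      rw [hatFn, abs_of_nonneg (by linarith), max_eq_right (by linarith)]; ring
  · have hc1' : k + 1 ≤ j * 2^d := hc1
    rcases le_or_gt (j*2^d) (k + 2^d) with hc2 | hc2
    · -- t ∈ [j-1, j]
      refine ⟨(2^m), 1-j, fun x hx => ?_⟩
      obtain ⟨ht1, ht2⟩ := key x hx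
      have hcast1 : (j:ℝ) * 2^d ≤ (k:ℝ) + 2^d := by exact_mod_cast hc2
      have hcast2 : (k:ℝ)+1 ≤ (j:ℝ) * 2^d := by exact_mod_cast hc1'
      have h1 : (j:ℝ)-1 ≤ x*2^m := by
        have : (j:ℝ)-1 ≤ (k:ℝ)/2^d := by
          rw [le_div_iff₀ hdpos]; nlinarith
        linarith
      have h2 : x*2^m ≤ (j:ℝ) := by
        have : ((k:ℝ)+1)/2^d ≤ (j:ℝ) := by rw [div_le_iff₀ hdpos]; linarith
        linarith
      rw [hatFn, abs_of_nonpos (by linarith), max_eq_right (by linarith)]; ring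
    · -- t ≤ j-1 : zero
      refine ⟨0, 0, fun x hx => ?_⟩
      obtain ⟨ht1, ht2⟩ := key x hx
      have hcast : (k:ℝ) + 1 + 2^d ≤ (j:ℝ) * 2^d := by
        have : (k + 1 + 2^d : ℕ) ≤ j * 2^d := by omega
        exact_mod_cast this
      have hj1 : ((k:ℝ)+1)/2^d ≤ (j:ℝ) - 1 := by
        rw [div_le_iff₀ hdpos]; nlinarith
      have habs : 1 ≤ |x*2^m - (j:ℝ)| := by
        rw [abs_sub_comm]
        exact le_trans (by linarith) (le_abs_self _)
      rw [hatFn_eq_zero habs]; ring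

end HierAux
namespace HierAux

def PLsub (ℓ : ℕ) : Submodule ℝ (Icc (0:ℝ) 1 → ℝ) where
  carrier := {f | Continuous f ∧ ∀ j : ℕ, j < 2^ℓ → ∃ a b : ℝ,
        ∀ x : Set.Icc (0:ℝ) 1, (x:ℝ) ∈ Set.Icc ((j:ℝ)/2^ℓ) (((j:ℝ)+1)/2^ℓ) →
          f x = a * (x:ℝ) + b}
  add_mem' := by
    rintro f g ⟨hfc, hf⟩ ⟨hgc, hg⟩
    refine ⟨hfc.add hgc, fun j hj => ?_⟩
    obtain ⟨a1, b1, h1⟩ := hf j hj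
    obtain ⟨a2, b2, h2⟩ := hg j hj
    exact ⟨a1+a2, b1+b2, fun x hx => by
      simp only [Pi.add_apply, h1 x hx, h2 x hx]; ring⟩
  zero_mem' := ⟨continuous_const, fun j hj => ⟨0, 0, fun x hx => by simp⟩⟩
  smul_mem' := by
    rintro c f ⟨hfc, hf⟩
    refine ⟨hfc.const_smul c, fun j hj => ?_⟩
    obtain ⟨a, b, h⟩ := hf j hj
    exact ⟨c*a, c*b, fun x hx => by
      simp only [Pi.smul_apply, h x hx, smul_eq_mul]; ring⟩

lemma hat_mem_PL {ℓ m j : ℕ} (hm : m ≤ ℓ) :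
    (fun x : Icc (0:ℝ) 1 => hatFn m j (x:ℝ)) ∈ PLsub ℓ := by
  constructor
  · have hc : Continuous (hatFn m j) := by
      apply continuous_const.max
      exact continuous_const.sub ((continuous_id.mul continuous_const).sub continuous_const).abs
    exact hc.comp continuous_subtype_val
  · intro k hk
    obtain ⟨a, b, hab⟩ := hatFn_affine hm hk (j := j)
    exact ⟨a, b, fun x hx => hab x hx⟩

lemma exists_cell {ℓ : ℕ} {x : ℝ} (hx : x ∈ Icc (0:ℝ) 1) :
    ∃ j : ℕ, j < 2^ℓ ∧ x ∈ Icc ((j:ℝ)/2^ℓ) (((j:ℝ)+1)/2^ℓ) := by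
  obtain ⟨h0, h1⟩ := hx
  have h2p : (0:ℝ) < 2^ℓ := by positivity
  have ht0 : 0 ≤ x * 2^ℓ := mul_nonneg h0 (le_of_lt h2p)
  have htt : x * 2^ℓ ≤ 2^ℓ := by nlinarith
  rcases lt_or_ge (⌊x * 2^ℓ⌋₊) (2^ℓ) with hf | hf
  · refine ⟨⌊x * 2^ℓ⌋₊, hf, ?_, ?_⟩
    · rw [div_le_iff₀ h2p]; exact Nat.floor_le ht0
    · rw [le_div_iff₀ h2p]
      exact le_of_lt (Nat.lt_floor_add_one _)
  · refine ⟨2^ℓ - 1, by have := Nat.one_le_two_pow (n := ℓ); omega, ?_, ?_⟩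
    · rw [div_le_iff₀ h2p]
      have hfle : ((⌊x * 2^ℓ⌋₊ : ℕ) : ℝ) ≤ x * 2^ℓ := Nat.floor_le ht0
      have : ((2^ℓ : ℕ) : ℝ) ≤ x * 2^ℓ := le_trans (by exact_mod_cast Nat.cast_le.mpr hf) hfle
      have hcast : (((2:ℕ)^ℓ - 1 : ℕ) : ℝ) = (2:ℝ)^ℓ - 1 := by
        have h1' : (1:ℕ) ≤ 2^ℓ := Nat.one_le_two_pow
        push_cast [Nat.cast_sub h1']
        ring
      rw [hcast]
      push_cast at this
      linarith
    · rw [le_div_iff₀ h2p]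
      have hcast : (((2:ℕ)^ℓ - 1 : ℕ) : ℝ) = (2:ℝ)^ℓ - 1 := by
        have h1' : (1:ℕ) ≤ 2^ℓ := Nat.one_le_two_pow
        push_cast [Nat.cast_sub h1']
        ring
      rw [hcast]
      linarith

lemma eq_zero_of_eval_zero {ℓ : ℕ} {f : Icc (0:ℝ) 1 → ℝ} (hf : f ∈ PLsub ℓ)
    (h0 : ∀ n : Fin (2^ℓ+1), f (node ℓ n) = 0) : f = 0 := by
  funext x
  obtain ⟨j, hj, hxj⟩ := exists_cell (ℓ := ℓ) x.2
  obtain ⟨a, b, hab⟩ := hf.2 j hj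
  have h2p : (0:ℝ) < 2^ℓ := by positivity
  have hjle : (j:ℝ)/2^ℓ ≤ ((j:ℝ)+1)/2^ℓ := by gcongr; linarith
  have m1 : ((node ℓ ⟨j, by omega⟩ : Icc (0:ℝ) 1) : ℝ) ∈ Icc ((j:ℝ)/2^ℓ) (((j:ℝ)+1)/2^ℓ) := by
    show nodeVal ℓ j ∈ _
    rw [nodeVal]
    exact ⟨le_refl _, hjle⟩
  have m2 : ((node ℓ ⟨j+1, by omega⟩ : Icc (0:ℝ) 1) : ℝ) ∈ Icc ((j:ℝ)/2^ℓ) (((j:ℝ)+1)/2^ℓ) := by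
    show nodeVal ℓ (j+1) ∈ _
    rw [nodeVal]
    push_cast
    exact ⟨hjle, le_refl _⟩
  have v1 : a * ((j:ℝ)/2^ℓ) + b = 0 := by
    have h := (hab _ m1).symm.trans (h0 ⟨j, by omega⟩)
    simpa [node, nodeVal] using h
  have v2 : a * (((j:ℝ)+1)/2^ℓ) + b = 0 := by
    have h := (hab _ m2).symm.trans (h0 ⟨j+1, by omega⟩)
    have hcoe : ((node ℓ ⟨j+1, by omega⟩ : Icc (0:ℝ) 1) : ℝ) = ((j:ℝ)+1)/2^ℓ := by
      show nodeVal ℓ (j+1) = _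
      rw [nodeVal]; push_cast; ring
    rw [hcoe] at h
    exact h
  have h3 : a / 2^ℓ = 0 := by linear_combination v2 - v1
  have ha : a = 0 := by
    rcases div_eq_zero_iff.mp h3 with h | h
    · exact h
    · exact absurd h (by positivity)
  have hb : b = 0 := by rw [ha] at v1; simpa using v1
  rw [hab x hxj, ha, hb]
  simp

end HierAux
namespace HierAux

instance hierNonempty (ℓ : ℕ) : Nonempty (hierIdx ℓ) :=
  ⟨⟨(0,0), ⟨Nat.zero_le _, Or.inl ⟨rfl, by norm_num⟩⟩⟩⟩

lemma span_eval_top (ℓ : ℕ) : Submodule.span ℝ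
    (Set.range (⇑(evalL ℓ) ∘ fun p : hierIdx ℓ =>
      (fun x : Icc (0:ℝ) 1 => hatFn p.1.1 p.1.2 (x:ℝ)))) = ⊤ := by
  have hcard : Fintype.card (hierIdx ℓ) = Module.finrank ℝ (Fin (2^ℓ+1) → ℝ) := by
    rw [card_hier, Module.finrank_fin_fun]
  have hLI : LinearIndependent ℝ (⇑(evalL ℓ) ∘ fun p : hierIdx ℓ =>
      (fun x : Icc (0:ℝ) 1 => hatFn p.1.1 p.1.2 (x:ℝ))) := li_eval ℓ
  have hB := coe_basisOfLinearIndependentOfCardEqFinrank hLI hcard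
  rw [← hB]
  exact (basisOfLinearIndependentOfCardEqFinrank hLI hcard).span_eq

end HierAux


open HierAux

/-- the hierarchical basis functions `{ψ_{m,j} : m ≤ ℓ, j ∈ B_m}`, viewed as
functions on `[0,1]`, are linearly independent, there are `2^ℓ + 1` of them, and they span
exactly the space of continuous piecewise linear functions on the uniform grid of mesh
`2^{-ℓ}` on `[0,1]` (i.e. `V_ℓ = W_0 ⊕ ⋯ ⊕ W_ℓ`). -/
theorem hierarchical_basis_spans (ℓ : ℕ) :
    LinearIndependent ℝ
      (fun p : hierIdx ℓ => fun x : Set.Icc (0:ℝ) 1 => hatFn p.1.1 p.1.2 (x:ℝ)) ∧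
    Nat.card (hierIdx ℓ) = 2^ℓ + 1 ∧
    (Submodule.span ℝ
        (Set.range (fun p : hierIdx ℓ => fun x : Set.Icc (0:ℝ) 1 => hatFn p.1.1 p.1.2 (x:ℝ)))
        : Set (Set.Icc (0:ℝ) 1 → ℝ)) =
      {f | Continuous f ∧ ∀ j : ℕ, j < 2^ℓ → ∃ a b : ℝ,
        ∀ x : Set.Icc (0:ℝ) 1, (x:ℝ) ∈ Set.Icc ((j:ℝ)/2^ℓ) (((j:ℝ)+1)/2^ℓ) →
          f x = a * (x:ℝ) + b} := by
  have hLIe : LinearIndependent ℝ (⇑(evalL ℓ) ∘ fun p : hierIdx ℓ =>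
      (fun x : Icc (0:ℝ) 1 => hatFn p.1.1 p.1.2 (x:ℝ))) := li_eval ℓ
  refine ⟨LinearIndependent.of_comp (evalL ℓ) hLIe, ?_, ?_⟩
  · rw [Nat.card_congr (hierEquiv ℓ), Nat.card_eq_fintype_card, Fintype.card_fin]
  · have hle : Submodule.span ℝ
        (Set.range (fun p : hierIdx ℓ => fun x : Set.Icc (0:ℝ) 1 => hatFn p.1.1 p.1.2 (x:ℝ)))
        ≤ PLsub ℓ := by
      rw [Submodule.span_le]
      rintro _ ⟨p, rfl⟩
      exact hat_mem_PL p.2.1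
    have hge : PLsub ℓ ≤ Submodule.span ℝ
        (Set.range (fun p : hierIdx ℓ => fun x : Set.Icc (0:ℝ) 1 => hatFn p.1.1 p.1.2 (x:ℝ))) := by
      intro f hf
      have hmem : evalL ℓ f ∈ Submodule.map (evalL ℓ) (Submodule.span ℝ
          (Set.range (fun p : hierIdx ℓ => fun x : Set.Icc (0:ℝ) 1 =>
            hatFn p.1.1 p.1.2 (x:ℝ)))) := by
        rw [Submodule.map_span, ← Set.range_comp, span_eval_top]
        trivial
      obtain ⟨g, hg, hgf⟩ := hmem
      have hgPL : g ∈ PLsub ℓ := hle hg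
      have hsub : f - g = 0 := by
        apply eq_zero_of_eval_zero (sub_mem hf hgPL)
        intro n
        have := congrFun hgf n
        simp only [evalL_apply] at this
        show f (node ℓ n) - g (node ℓ n) = 0
        rw [← this]
        ring
      have : f = g := by rwa [sub_eq_zero] at hsub
      rw [this]
      exact hg
    have hPL : Submodule.span ℝ
        (Set.range (fun p : hierIdx ℓ => fun x : Set.Icc (0:ℝ) 1 => hatFn p.1.1 p.1.2 (x:ℝ)))
        = PLsub ℓ := le_antisymm hle hge
    rw [hPL]
    rfl
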